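/- Block loss lower bound: for any feature map f with ℓ convex, the block contrastive loss L_un^block(f) = E[ ℓ( f(x) · ( (1/b)Σ_{i=1}^b f(x_i⁺) − (1/b)Σ_{i=1}^b f(x_i⁻) ) ) ] is at most the contrastive loss L_un(f) = E[ (1/b²) Σ_{i,j} ℓ( f(x) · (f(x_i⁺) − f(x_j⁻)) ) ], where x, x₁⁺,…,x_b⁺ ∼ D_{c⁺} and x₁⁻,…,x_b⁻ ∼ D_{c⁻} with (c⁺,c⁻) ∼ ρ². -/

import Mathlib

open MeasureTheory

/-- Block loss lower bound (Jensen): the block contrastive loss is at most the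
contrastive loss, for a convex loss `ℓ`. -/
theorem stmt15 {X : Type*} [MeasurableSpace X] {C : Type*} [Fintype C] {d : ℕ}
    (b : ℕ) (hb : 0 < b)
    (ρ : C → ℝ) (hρ0 : ∀ c, 0 ≤ ρ c) (hρ1 : ∑ c, ρ c = 1)
    (D : C → Measure X) (hD : ∀ c, IsProbabilityMeasure (D c))
    (f : X → EuclideanSpace ℝ (Fin d))
    (ℓ : ℝ → ℝ) (hconv : ConvexOn ℝ Set.univ ℓ)
    -- joint distribution of (x, (x₁⁺,…,x_b⁺), (x₁⁻,…,x_b⁻)) given the classes (cp, cm)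
    (ν : C → C → Measure (X × (Fin b → X) × (Fin b → X)))
    (hν : ∀ cp cm, ν cp cm =
      (D cp).prod ((Measure.pi fun _ => D cp).prod (Measure.pi fun _ => D cm)))
    (hInt1 : ∀ cp cm, Integrable (fun z =>
      ℓ (inner ℝ (f z.1) ((b : ℝ)⁻¹ • ∑ i, f (z.2.1 i) - (b : ℝ)⁻¹ • ∑ i, f (z.2.2 i)) : ℝ)) (ν cp cm))
    (hInt2 : ∀ cp cm, ∀ i j : Fin b, Integrable (fun z =>
      ℓ (inner ℝ (f z.1) (f (z.2.1 i) - f (z.2.2 j)) : ℝ)) (ν cp cm)) :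
    (∑ cp, ∑ cm, ρ cp * ρ cm * ∫ z,
        ℓ (inner ℝ (f z.1) ((b : ℝ)⁻¹ • ∑ i, f (z.2.1 i) - (b : ℝ)⁻¹ • ∑ i, f (z.2.2 i)) : ℝ) ∂(ν cp cm)) ≤
      ∑ cp, ∑ cm, ρ cp * ρ cm * ∫ z,
        ((b : ℝ) ^ 2)⁻¹ * ∑ i, ∑ j, ℓ (inner ℝ (f z.1) (f (z.2.1 i) - f (z.2.2 j)) : ℝ) ∂(ν cp cm) := by
  have hbR : (0 : ℝ) < b := Nat.cast_pos.mpr hb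
  -- pointwise Jensen
  have key : ∀ (v : EuclideanSpace ℝ (Fin d)) (p m : Fin b → EuclideanSpace ℝ (Fin d)),
      ℓ (inner ℝ v ((b : ℝ)⁻¹ • ∑ i, p i - (b : ℝ)⁻¹ • ∑ i, m i) : ℝ) ≤
      ((b : ℝ) ^ 2)⁻¹ * ∑ i, ∑ j, ℓ (inner ℝ v (p i - m j) : ℝ) := by
    intro v p m
    have hsum : (∑ ij : Fin b × Fin b, ((b : ℝ) ^ 2)⁻¹) = 1 := by
      simp [Finset.card_univ]
      field_simp
    have hJ := hconv.map_sum_le (t := Finset.univ) (w := fun _ : Fin b × Fin b => ((b:ℝ)^2)⁻¹)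
      (p := fun ij => (inner ℝ v (p ij.1 - m ij.2) : ℝ))
      (fun _ _ => by positivity) hsum (fun _ _ => Set.mem_univ _)
    have harg : (∑ ij : Fin b × Fin b, ((b:ℝ)^2)⁻¹ • (inner ℝ v (p ij.1 - m ij.2) : ℝ))
        = (inner ℝ v ((b : ℝ)⁻¹ • ∑ i, p i - (b : ℝ)⁻¹ • ∑ i, m i) : ℝ) := by
      simp only [smul_eq_mul, inner_sub_right, inner_smul_right, inner_sum,
        Fintype.sum_prod_type]
      simp only [← Finset.mul_sum]
      simp only [Finset.sum_sub_distrib, Finset.sum_const, Finset.card_univ,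
        Fintype.card_fin, nsmul_eq_mul, ← Finset.mul_sum]
      field_simp
    calc ℓ (inner ℝ v ((b : ℝ)⁻¹ • ∑ i, p i - (b : ℝ)⁻¹ • ∑ i, m i) : ℝ)
        = ℓ (∑ ij : Fin b × Fin b, ((b:ℝ)^2)⁻¹ • (inner ℝ v (p ij.1 - m ij.2) : ℝ)) := by rw [harg]
      _ ≤ ∑ ij : Fin b × Fin b, ((b:ℝ)^2)⁻¹ • ℓ (inner ℝ v (p ij.1 - m ij.2) : ℝ) := hJ
      _ = ((b : ℝ) ^ 2)⁻¹ * ∑ i, ∑ j, ℓ (inner ℝ v (p i - m j) : ℝ) := by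
          simp [Fintype.sum_prod_type, Finset.mul_sum]
  refine Finset.sum_le_sum fun cp _ => Finset.sum_le_sum fun cm _ => ?_
  have hρnn : 0 ≤ ρ cp * ρ cm := mul_nonneg (hρ0 cp) (hρ0 cm)
  refine mul_le_mul_of_nonneg_left ?_ hρnn
  refine integral_mono (hInt1 cp cm) ?_ (fun z => key (f z.1) (fun i => f (z.2.1 i)) (fun i => f (z.2.2 i)))
  exact (integrable_finset_sum _ (fun i _ => integrable_finset_sum _ (fun j _ => hInt2 cp cm i j))).const_mul _
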